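/- For every integer n ≥ 1 there exists a constant C > 0 such that for all λ ≥ 1, the number of lattice points k ∈ ℤⁿ with Euclidean norm ‖k‖ ≤ λ satisfies |#{k ∈ ℤⁿ : ‖k‖ ≤ λ} − ω_n λⁿ| ≤ C λ^{n−1}, where ω_n = π^{n/2}/Γ(n/2 + 1) is the volume of the unit ball in ℝⁿ. -/

import Mathlib

open MeasureTheory Filter Topology

/-- Euclidean norm on `Fin n → ℝ`. -/
noncomputable def euclNorm {n : ℕ} (v : Fin n → ℝ) : ℝ := Real.sqrt (∑ i, (v i)^2)

lemma euclNorm_eq {n : ℕ} (v : Fin n → ℝ) :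
    euclNorm v = ‖(WithLp.equiv 2 (Fin n → ℝ)).symm v‖ := by
  simp [euclNorm, EuclideanSpace.norm_eq, WithLp.equiv_symm_apply, Real.norm_eq_abs, sq_abs]

lemma euclNorm_tri {n : ℕ} (a b : Fin n → ℝ) : euclNorm a ≤ euclNorm b + euclNorm (a - b) := by
  rw [euclNorm_eq, euclNorm_eq, euclNorm_eq]
  have h : (WithLp.equiv 2 (Fin n → ℝ)).symm a =
      (WithLp.equiv 2 (Fin n → ℝ)).symm b + (WithLp.equiv 2 (Fin n → ℝ)).symm (a - b) := by
    simp [WithLp.equiv_symm_apply, WithLp.toLp_sub]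
  rw [h]
  exact norm_add_le _ _

lemma euclNorm_le_sqrt {n : ℕ} (v : Fin n → ℝ) (h : ∀ i, (v i)^2 ≤ 1) :
    euclNorm v ≤ Real.sqrt n := by
  unfold euclNorm
  apply Real.sqrt_le_sqrt
  calc ∑ i, (v i)^2 ≤ ∑ _i : Fin n, (1:ℝ) := Finset.sum_le_sum fun i _ => h i
    _ = n := by simp

def latCube {n : ℕ} (k : Fin n → ℤ) : Set (Fin n → ℝ) :=
  Set.univ.pi fun i => Set.Ico (k i : ℝ) (k i + 1)

lemma mem_latCube_iff {n : ℕ} (k : Fin n → ℤ) (x : Fin n → ℝ) :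
    x ∈ latCube k ↔ ∀ i, ⌊x i⌋ = k i := by
  simp only [latCube, Set.mem_pi, Set.mem_univ, forall_true_left, Set.mem_Ico]
  refine forall_congr' fun i => ?_
  rw [Int.floor_eq_iff]

lemma latCube_measurable {n : ℕ} (k : Fin n → ℤ) : MeasurableSet (latCube k) :=
  MeasurableSet.univ_pi fun _i => measurableSet_Ico

lemma latCube_volume {n : ℕ} (k : Fin n → ℤ) : volume (latCube k) = 1 := by
  rw [latCube, volume_pi_pi]
  simp

lemma latCube_disjoint {n : ℕ} : Pairwise (Function.onFun Disjoint (latCube (n := n))) := by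
  intro k l hkl
  rw [Function.onFun, Set.disjoint_left]
  intro x hx hx'
  rw [mem_latCube_iff] at hx hx'
  exact hkl (funext fun i => (hx i).symm.trans (hx' i))

lemma volume_euclBall {n : ℕ} [NeZero n] (r : ℝ) :
    volume {x : Fin n → ℝ | euclNorm x ≤ r} =
      ENNReal.ofReal r ^ n * ENNReal.ofReal (Real.sqrt Real.pi ^ n / Real.Gamma (n / 2 + 1)) := by
  have hset : {x : Fin n → ℝ | euclNorm x ≤ r} =
      (MeasurableEquiv.toLp 2 (Fin n → ℝ)).symm.symm ⁻¹'
        Metric.closedBall (0 : EuclideanSpace ℝ (Fin n)) r := by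
    ext x
    simp only [Set.mem_setOf_eq, Set.mem_preimage, Metric.mem_closedBall, dist_zero_right,
      MeasurableEquiv.symm_symm, MeasurableEquiv.coe_toLp]
    rw [EuclideanSpace.norm_eq]
    simp [euclNorm, Real.norm_eq_abs, sq_abs]
  rw [hset, ((EuclideanSpace.volume_preserving_symm_measurableEquiv_toLp (Fin n)).symm _).measure_preimage
    measurableSet_closedBall.nullMeasurableSet]
  have : Nonempty (Fin n) := Fin.pos_iff_nonempty.mp (Nat.pos_of_ne_zero (NeZero.ne n))
  rw [EuclideanSpace.volume_closedBall]
  simp [Fintype.card_fin]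

lemma pow_gap' {x y : ℝ} (hx : 0 ≤ x) (hxy : x ≤ y) (n : ℕ) :
    y ^ n - x ^ n ≤ n * (y - x) * y ^ (n - 1) := by
  induction n with
  | zero => simp
  | succ k ih =>
    have hy : 0 ≤ y := hx.trans hxy
    cases k with
    | zero => simp
    | succ m =>
      have h1 : y ^ (m + 2) - x ^ (m + 2) = y * (y ^ (m+1) - x ^ (m+1)) + x ^ (m+1) * (y - x) := by
        ring
      have h2 : x ^ (m+1) ≤ y ^ (m+1) := pow_le_pow_left₀ hx hxy _
      have h3 : y * (y ^ (m+1) - x ^ (m+1)) ≤ y * ((m+1) * (y - x) * y ^ m) := by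
        apply mul_le_mul_of_nonneg_left _ hy
        simpa using ih
      have h4 : x ^ (m+1) * (y - x) ≤ y ^ (m+1) * (y - x) :=
        mul_le_mul_of_nonneg_right h2 (by linarith)
      calc y ^ (m + 2) - x ^ (m + 2) ≤ y * ((m+1) * (y - x) * y ^ m) + y ^ (m+1) * (y - x) := by
            rw [h1]; exact add_le_add h3 h4
        _ = (↑(m+2)) * (y - x) * y ^ (m + 2 - 1) := by push_cast; ring

lemma main_est (N ω' a lam : ℝ) (n : ℕ) (hn : 1 ≤ n) (hω : 0 < ω') (ha : 1 ≤ a)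
    (hlam : 1 ≤ lam) (hup : N ≤ (lam + a)^n * ω')
    (hlo : ω' * (max (lam - a) 0)^n ≤ N) :
    |N - ω' * lam^n| ≤ (ω' * (n * (a+1)^n)) * lam^(n-1) := by
  set b := max (lam - a) 0 with hbdef
  have hl0 : (0:ℝ) < lam := lt_of_lt_of_le one_pos hlam
  have ha0 : (0:ℝ) < a := lt_of_lt_of_le one_pos ha
  have hb0 : (0:ℝ) ≤ b := le_max_right _ _
  have hbl : b ≤ lam := max_le (by linarith) (by linarith)
  have hgap : lam - b ≤ a := by
    rcases le_total (lam - a) 0 with h | h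
    · rw [hbdef, max_eq_right h]; linarith
    · rw [hbdef, max_eq_left h]; linarith
  have hpow1 : (a+1)^(n-1) * (a+1) = (a+1)^n := by
    rw [← pow_succ, Nat.sub_add_cancel hn]
  have hpow_pos : (0:ℝ) < (a+1)^(n-1) := by positivity
  have hln1 : (0:ℝ) < lam ^ (n-1) := by positivity
  have haa : a ≤ (a+1)^n := by
    calc a ≤ a + 1 := by linarith
      _ ≤ (a+1)^n := le_self_pow₀ (by linarith) (by omega)
  rw [abs_le]
  constructor
  · have e1 : lam^n - b^n ≤ (n:ℝ) * a * lam^(n-1) := by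
      have h := pow_gap' hb0 hbl n
      have h2 : (n:ℝ) * (lam - b) * lam^(n-1) ≤ (n:ℝ) * a * lam^(n-1) := by
        gcongr
      linarith
    have e2 : ω' * lam^n - N ≤ ω' * ((n:ℝ) * a * lam^(n-1)) := by
      have h := mul_le_mul_of_nonneg_left e1 hω.le
      rw [mul_sub] at h
      linarith
    have e3 : ω' * ((n:ℝ) * a * lam^(n-1)) ≤ (ω' * (n * (a+1)^n)) * lam^(n-1) := by
      calc ω' * ((n:ℝ) * a * lam^(n-1)) = ω' * ((n:ℝ) * a) * lam^(n-1) := by ring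
        _ ≤ ω' * ((n:ℝ) * (a+1)^n) * lam^(n-1) := by gcongr
    linarith
  · have e1 : (lam+a)^n - lam^n ≤ (n:ℝ) * a * (lam+a)^(n-1) := by
      have h := pow_gap' hl0.le (by linarith : lam ≤ lam + a) n
      have e : lam + a - lam = a := by ring
      rw [e] at h
      exact h
    have e2 : (lam+a)^(n-1) ≤ (a+1)^(n-1) * lam^(n-1) := by
      rw [← mul_pow]
      exact pow_le_pow_left₀ (by linarith) (by nlinarith) _
    have e3 : N - ω' * lam^n ≤ ω' * ((lam+a)^n - lam^n) := by
      calc N - ω' * lam^n ≤ (lam+a)^n * ω' - ω' * lam^n := by linarith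
        _ = ω' * ((lam+a)^n - lam^n) := by ring
    have e4 : ω' * ((lam+a)^n - lam^n) ≤ ω' * ((n:ℝ) * a * ((a+1)^(n-1) * lam^(n-1))) := by
      have h : (lam+a)^n - lam^n ≤ (n:ℝ) * a * ((a+1)^(n-1) * lam^(n-1)) := by
        calc (lam+a)^n - lam^n ≤ (n:ℝ) * a * (lam+a)^(n-1) := e1
          _ ≤ (n:ℝ) * a * ((a+1)^(n-1) * lam^(n-1)) := by gcongr
      exact mul_le_mul_of_nonneg_left h hω.le
    have e5 : ω' * ((n:ℝ) * a * ((a+1)^(n-1) * lam^(n-1))) ≤ (ω' * (n * (a+1)^n)) * lam^(n-1) := by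
      have h6 : a * (a+1)^(n-1) ≤ (a+1)^n := by
        rw [← hpow1]
        calc a * (a+1)^(n-1) = (a+1)^(n-1) * a := by ring
          _ ≤ (a+1)^(n-1) * (a+1) := by gcongr; linarith
      calc ω' * ((n:ℝ) * a * ((a+1)^(n-1) * lam^(n-1)))
          = ω' * ((n:ℝ) * (a * (a+1)^(n-1))) * lam^(n-1) := by ring
        _ ≤ ω' * ((n:ℝ) * (a+1)^n) * lam^(n-1) := by gcongr
    linarith

theorem statement2 (n : ℕ) (hn : 1 ≤ n) :
    ∃ C > (0:ℝ), ∀ lam : ℝ, 1 ≤ lam →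
      |(({k : Fin n → ℤ | euclNorm (fun i => (k i : ℝ)) ≤ lam}.ncard : ℝ)
          - (Real.pi ^ ((n : ℝ)/2) / Real.Gamma ((n : ℝ)/2 + 1)) * lam ^ n)|
        ≤ C * lam ^ (n - 1) := by
  have : NeZero n := ⟨Nat.one_le_iff_ne_zero.mp hn⟩
  set a : ℝ := Real.sqrt n with hadef
  have ha1 : 1 ≤ a := by
    rw [hadef, show (1:ℝ) = Real.sqrt 1 by simp]
    exact Real.sqrt_le_sqrt (by exact_mod_cast hn)
  set ω' : ℝ := Real.sqrt Real.pi ^ n / Real.Gamma ((n:ℝ) / 2 + 1) with hωdef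
  have hΓ : 0 < Real.Gamma ((n:ℝ) / 2 + 1) := Real.Gamma_pos_of_pos (by positivity)
  have hω : 0 < ω' := div_pos (pow_pos (Real.sqrt_pos.mpr Real.pi_pos) n) hΓ
  have hωeq : Real.pi ^ ((n : ℝ)/2) / Real.Gamma ((n : ℝ)/2 + 1) = ω' := by
    rw [hωdef]
    congr 1
    rw [Real.sqrt_eq_rpow, ← Real.rpow_natCast (Real.pi ^ ((1:ℝ)/2)) n,
      ← Real.rpow_mul Real.pi_pos.le]
    congr 1
    ring
  refine ⟨ω' * (n * (a+1)^n), by positivity, fun lam hlam => ?_⟩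
  set S : Set (Fin n → ℤ) := {k : Fin n → ℤ | euclNorm (fun i => (k i : ℝ)) ≤ lam} with hSdef
  -- finiteness
  have hkey : ∀ k ∈ S, ∀ i, |(k i : ℝ)| ≤ lam := by
    intro k hk i
    have h1 : ((k i : ℝ))^2 ≤ ∑ j, ((k j : ℝ))^2 :=
      Finset.single_le_sum (f := fun j => ((k j : ℝ))^2) (fun j _ => sq_nonneg _) (Finset.mem_univ i)
    calc |(k i : ℝ)| = Real.sqrt (((k i : ℝ))^2) := (Real.sqrt_sq_eq_abs _).symm
      _ ≤ Real.sqrt (∑ j, ((k j : ℝ))^2) := Real.sqrt_le_sqrt h1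
      _ ≤ lam := hk
  have hS : S.Finite := by
    apply (Set.finite_Icc (fun _ : Fin n => -⌈lam⌉) (fun _ => ⌈lam⌉)).subset
    intro k hk
    constructor
    · intro i
      have h := (abs_le.mp (hkey k hk i)).1
      have : (-⌈lam⌉ : ℝ) ≤ (k i : ℝ) := le_trans (by simpa using neg_le_neg (Int.le_ceil lam)) h
      exact_mod_cast this
    · intro i
      have h := (abs_le.mp (hkey k hk i)).2
      have : (k i : ℝ) ≤ (⌈lam⌉ : ℝ) := le_trans h (Int.le_ceil lam)
      exact_mod_cast this
  set T : Set (Fin n → ℝ) := ⋃ k ∈ S, latCube k with hTdef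
  -- volume of T
  have hvolT : volume T = (S.ncard : ENNReal) := by
    have hT2 : T = ⋃ k ∈ hS.toFinset, latCube k := by
      ext x; simp [hTdef, hS.mem_toFinset]
    rw [hT2, measure_biUnion_finset (fun k _ l _ hkl => latCube_disjoint hkl)
      (fun k _ => latCube_measurable k)]
    simp only [latCube_volume, Finset.sum_const, nsmul_eq_mul, mul_one]
    rw [Set.ncard_eq_toFinset_card S hS]
  -- upper inclusion
  have hTup : T ⊆ {x : Fin n → ℝ | euclNorm x ≤ lam + a} := by
    intro x hx
    simp only [hTdef, Set.mem_iUnion] at hx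
    obtain ⟨k, hkS, hkx⟩ := hx
    rw [mem_latCube_iff] at hkx
    have h1 : euclNorm (x - fun i => (k i : ℝ)) ≤ a := by
      apply euclNorm_le_sqrt
      intro i
      have hfl := hkx i
      have h1 := Int.floor_le (x i)
      have h2 := Int.lt_floor_add_one (x i)
      rw [hfl] at h1 h2
      simp only [Pi.sub_apply]
      nlinarith
    have h2 := euclNorm_tri x (fun i => (k i : ℝ))
    have hkS' : euclNorm (fun i => (k i : ℝ)) ≤ lam := hkS
    exact le_trans h2 (by linarith)
  -- lower inclusion
  have hTlo : {x : Fin n → ℝ | euclNorm x ≤ lam - a} ⊆ T := by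
    intro x hx
    simp only [Set.mem_setOf_eq] at hx
    set k : Fin n → ℤ := fun i => ⌊x i⌋ with hkdef
    have hxk : x ∈ latCube k := by rw [mem_latCube_iff]; intro i; rfl
    have hkS : k ∈ S := by
      have h1 : euclNorm ((fun i => (k i : ℝ)) - x) ≤ a := by
        apply euclNorm_le_sqrt
        intro i
        have h1 := Int.floor_le (x i)
        have h2 := Int.lt_floor_add_one (x i)
        simp only [Pi.sub_apply]
        nlinarith
      have h2 := euclNorm_tri (fun i => (k i : ℝ)) x
      simp only [hSdef, Set.mem_setOf_eq]
      linarith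
    simp only [hTdef, Set.mem_iUnion]
    exact ⟨k, hkS, hxk⟩
  -- volume inequalities
  have hup : (S.ncard : ℝ) ≤ (lam + a)^n * ω' := by
    have h := measure_mono (μ := volume) hTup
    rw [hvolT, volume_euclBall] at h
    have hnn : (0:ℝ) ≤ lam + a := by linarith
    rw [← ENNReal.ofReal_pow hnn, ← ENNReal.ofReal_mul (by positivity)] at h
    have := ENNReal.toReal_mono ENNReal.ofReal_ne_top h
    rwa [ENNReal.toReal_natCast, ENNReal.toReal_ofReal (by positivity)] at this
  have hlo : ω' * (max (lam - a) 0)^n ≤ (S.ncard : ℝ) := by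
    have h := measure_mono (μ := volume) hTlo
    rw [hvolT, volume_euclBall] at h
    have heq : ENNReal.ofReal (lam - a) = ENNReal.ofReal (max (lam - a) 0) := by
      rcases le_total (lam - a) 0 with hc | hc
      · rw [ENNReal.ofReal_eq_zero.mpr hc, max_eq_right hc, ENNReal.ofReal_zero]
      · rw [max_eq_left hc]
    rw [heq, ← ENNReal.ofReal_pow (le_max_right _ _),
      ← ENNReal.ofReal_mul (by positivity)] at h
    have := ENNReal.toReal_mono (ENNReal.natCast_ne_top _) h
    rw [ENNReal.toReal_natCast, ENNReal.toReal_ofReal (by positivity)] at this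
    linarith [this]
  -- conclude
  rw [hωeq]
  have := main_est (S.ncard : ℝ) ω' a lam n hn hω ha1 hlam hup hlo
  calc |(S.ncard : ℝ) - ω' * lam ^ n| ≤ (ω' * (n * (a+1)^n)) * lam^(n-1) := this
    _ = (ω' * (n * (a+1)^n)) * lam^(n-1) := rfl
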